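/- arXiv:1111.4963 — 2 statements merged into one kernel-verified Lean document; each statement's English description precedes it below -/
import Mathlib

section
/- Let K be a number field with unit rank r, and fix κ > 0. There exists a constant q (depending only on κ, K, and a choice of fundamental units) such that for every D ≥ 1 + κ, the number of units u ∈ O_K^× with H_K(u) ≤ D is at most q · (log D)^r. -/
open NumberField IsDedekindDomain Real
open scoped nonZeroDivisors Classical

variable (K : Type*) [Field K] [NumberField K]

/-- The normalized `v`-adic absolute value `|x|_v^{n_v} = N(v)^{-ord_v(x)}` at a finite place. -/
noncomputable def vadicAbs (v : HeightOneSpectrum (𝓞 K)) (x : K) : ℝ :=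
  if hx : v.valuation K x = 0 then 0
  else (Ideal.absNorm v.asIdeal : ℝ) ^ (Multiplicative.toAdd (WithZero.unzero hx))

/-- The relative multiplicative height `H_K(x) = ∏_{v ∈ M_K} max {|x|_v^{n_v}, 1}`. -/
noncomputable def relHeight (x : K) : ℝ :=
  (∏ w : InfinitePlace K, max (w x ^ w.mult) 1) *
    ∏ᶠ v : HeightOneSpectrum (𝓞 K), max (vadicAbs K v x) 1

open NumberField.Units NumberField.Units.dirichletUnitTheorem

theorem vadicAbs_unit (v : HeightOneSpectrum (𝓞 K)) (u : (𝓞 K)ˣ) :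
    vadicAbs K v (algebraMap (𝓞 K) K (u : 𝓞 K)) = 1 := by
  have h1 : v.valuation K (algebraMap (𝓞 K) K (u : 𝓞 K)) ≤ 1 := v.valuation_le_one _
  have h2 : v.valuation K (algebraMap (𝓞 K) K ((u⁻¹ : (𝓞 K)ˣ) : 𝓞 K)) ≤ 1 := v.valuation_le_one _
  have hmul : v.valuation K (algebraMap (𝓞 K) K (u : 𝓞 K)) *
      v.valuation K (algebraMap (𝓞 K) K ((u⁻¹ : (𝓞 K)ˣ) : 𝓞 K)) = 1 := by
    rw [← Valuation.map_mul, ← map_mul, Units.mul_inv, map_one, Valuation.map_one]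
  have hval : v.valuation K (algebraMap (𝓞 K) K (u : 𝓞 K)) = 1 := by
    refine le_antisymm h1 ?_
    calc (1 : WithZero (Multiplicative ℤ)) = _ := hmul.symm
    _ ≤ v.valuation K (algebraMap (𝓞 K) K (u : 𝓞 K)) * 1 := mul_le_mul_right h2 _
    _ = v.valuation K (algebraMap (𝓞 K) K (u : 𝓞 K)) := mul_one _
  have hne : ¬ v.valuation K (algebraMap (𝓞 K) K (u : 𝓞 K)) = 0 := by
    rw [hval]; exact one_ne_zero
  rw [vadicAbs, dif_neg hne]
  have hunz : WithZero.unzero hne = 1 :=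
    WithZero.coe_inj.mp (by rw [WithZero.coe_unzero, hval, WithZero.coe_one])
  rw [hunz, toAdd_one, zpow_zero]

theorem relHeight_unit (u : (𝓞 K)ˣ) :
    relHeight K (algebraMap (𝓞 K) K (u : 𝓞 K)) =
      ∏ w : InfinitePlace K, max (w (algebraMap (𝓞 K) K (u : 𝓞 K)) ^ w.mult) 1 := by
  rw [relHeight, finprod_eq_one_of_forall_eq_one fun v => by rw [vadicAbs_unit]; exact max_self 1,
    mul_one]

theorem abs_logEmbedding_le_log (u : (𝓞 K)ˣ) {D : ℝ} (hD : 1 ≤ D)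
    (h : relHeight K (algebraMap (𝓞 K) K (u : 𝓞 K)) ≤ D) :
    ‖logEmbedding K (Additive.ofMul u)‖ ≤ Real.log D := by
  set x : K := algebraMap (𝓞 K) K (u : 𝓞 K) with hxdef
  set s : InfinitePlace K → ℝ := fun w => (w.mult : ℝ) * Real.log (w x) with hsdef
  have hx0 : x ≠ 0 := by
    have : (u : 𝓞 K) ≠ 0 := u.ne_zero
    simpa [hxdef] using (map_ne_zero_iff _ (IsFractionRing.injective (𝓞 K) K)).mpr this
  have hwpos : ∀ w : InfinitePlace K, 0 < w x := fun w => InfinitePlace.pos_iff.mpr hx0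
  have hmax : ∀ w : InfinitePlace K, Real.log (max (w x ^ w.mult) 1) = max (s w) 0 := by
    intro w
    have hp : 0 < w x ^ w.mult := pow_pos (hwpos w) _
    have hlogpow : Real.log (w x ^ w.mult) = s w := Real.log_pow _ _
    rcases le_total (w x ^ w.mult) 1 with hle | hle
    · rw [max_eq_right hle, Real.log_one,
        max_eq_right (by rw [← hlogpow]; exact Real.log_nonpos hp.le hle)]
    · rw [max_eq_left hle, hlogpow,
        max_eq_left (by rw [← hlogpow]; exact Real.log_nonneg hle)]
  have hprodpos : (0 : ℝ) < ∏ w : InfinitePlace K, max (w x ^ w.mult) 1 :=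
    Finset.prod_pos fun w _ => lt_of_lt_of_le one_pos (le_max_right _ _)
  have hsumle : ∑ w : InfinitePlace K, max (s w) 0 ≤ Real.log D := by
    have h1 : Real.log (∏ w : InfinitePlace K, max (w x ^ w.mult) 1) ≤ Real.log D := by
      refine Real.log_le_log hprodpos ?_
      rw [← relHeight_unit]; exact h
    rwa [Real.log_prod (fun w _ => (lt_of_lt_of_le one_pos (le_max_right _ _)).ne'),
      Finset.sum_congr rfl fun w _ => hmax w] at h1
  have hsum0 : ∑ w : InfinitePlace K, s w = 0 := by
    have hprod : ∏ w : InfinitePlace K, w x ^ w.mult = |Algebra.norm ℚ x| :=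
      InfinitePlace.prod_eq_abs_norm x
    have hnorm : |Algebra.norm ℚ x| = 1 := NumberField.Units.norm K u
    have := congrArg Real.log hprod
    rw [Real.log_prod (fun w _ => (pow_pos (hwpos w) _).ne'), hnorm] at this
    simpa [Real.log_pow, hsdef] using this
  rw [pi_norm_le_iff_of_nonneg (Real.log_nonneg hD)]
  intro w
  rw [Real.norm_eq_abs, logEmbedding_component, abs_le]
  have hcoe : (w.1.mult : ℝ) * Real.log (w.1 x) = s w.1 := rfl
  constructor
  · have herase : ∑ w' ∈ Finset.univ.erase w.1, s w' + s w.1 = 0 := by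
      rw [Finset.sum_erase_add _ _ (Finset.mem_univ _)]; exact hsum0
    have hle : ∑ w' ∈ Finset.univ.erase w.1, s w' ≤ Real.log D := by
      calc ∑ w' ∈ Finset.univ.erase w.1, s w'
          ≤ ∑ w' ∈ Finset.univ.erase w.1, max (s w') 0 :=
            Finset.sum_le_sum fun _ _ => le_max_left _ _
        _ ≤ ∑ w' : InfinitePlace K, max (s w') 0 :=
            Finset.sum_le_sum_of_subset_of_nonneg (Finset.subset_univ _)
              (fun _ _ _ => le_max_right _ _)
        _ ≤ Real.log D := hsumle
    rw [hcoe]; linarith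
  · rw [hcoe]
    calc s w.1 ≤ max (s w.1) 0 := le_max_left _ _
      _ ≤ ∑ w' : InfinitePlace K, max (s w') 0 :=
          Finset.single_le_sum (f := fun w' : InfinitePlace K => max (s w') 0)
            (fun _ _ => le_max_right _ _) (Finset.mem_univ _)
      _ ≤ Real.log D := hsumle

theorem unitLattice_finite_of_norm_le (T : ℝ) :
    {x : ({w : InfinitePlace K // w ≠ w₀} → ℝ) | x ∈ unitLattice K ∧ ‖x‖ ≤ T}.Finite := by
  have := unitLattice_inter_ball_finite K T
  refine this.subset ?_
  intro x hx
  exact ⟨hx.1, by rw [Metric.mem_closedBall, dist_zero_right]; exact hx.2⟩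

open NumberField.Units in
theorem lattice_count (T : ℝ) (hT : 0 ≤ T) :
    Nat.card {x : ({w : InfinitePlace K // w ≠ w₀} → ℝ) // x ∈ unitLattice K ∧ ‖x‖ ≤ T} ≤
    Nat.card {x : ({w : InfinitePlace K // w ≠ w₀} → ℝ) // x ∈ unitLattice K ∧ ‖x‖ ≤ 1} *
      (2 * ⌈T⌉ + 1).toNat ^ rank K := by
  classical
  set ι := {w : InfinitePlace K // w ≠ w₀}
  have finA : Finite {x : ι → ℝ // x ∈ unitLattice K ∧ ‖x‖ ≤ T} :=
    (unitLattice_finite_of_norm_le K T).to_subtype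
  have finB : Finite {x : ι → ℝ // x ∈ unitLattice K ∧ ‖x‖ ≤ 1} :=
    (unitLattice_finite_of_norm_le K 1).to_subtype
  set c : (ι → ℤ) → (ι → ℝ) := fun v =>
    if h : ∃ y : ι → ℝ, y ∈ unitLattice K ∧ ∀ i, ⌊y i⌋ = v i then h.choose else 0 with hcdef
  have hc : ∀ v : ι → ℤ, (∃ y : ι → ℝ, y ∈ unitLattice K ∧ ∀ i, ⌊y i⌋ = v i) →
      c v ∈ unitLattice K ∧ ∀ i, ⌊c v i⌋ = v i := by
    intro v hv
    simp only [hcdef, dif_pos hv]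
    exact hv.choose_spec
  have key : ∀ x : {x : ι → ℝ // x ∈ unitLattice K ∧ ‖x‖ ≤ T},
      (x.1 - c (fun i => ⌊x.1 i⌋)) ∈ unitLattice K ∧ ‖x.1 - c (fun i => ⌊x.1 i⌋)‖ ≤ 1 ∧
      ∀ i, ⌊x.1 i⌋ ∈ Finset.Icc (-⌈T⌉) ⌈T⌉ := by
    intro x
    have hex : ∃ y : ι → ℝ, y ∈ unitLattice K ∧ ∀ i, ⌊y i⌋ = (fun i => ⌊x.1 i⌋) i :=
      ⟨x.1, x.2.1, fun i => rfl⟩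
    obtain ⟨hmem, hfl⟩ := hc _ hex
    refine ⟨Submodule.sub_mem _ x.2.1 hmem, ?_, ?_⟩
    · rw [pi_norm_le_iff_of_nonneg zero_le_one]
      intro i
      rw [Pi.sub_apply, Real.norm_eq_abs]
      exact (Int.abs_sub_lt_one_of_floor_eq_floor ((hfl i).symm ▸ rfl : ⌊x.1 i⌋ = ⌊c _ i⌋)).le
    · intro i
      have hb : |x.1 i| ≤ T := by
        have := norm_le_pi_norm x.1 i
        rw [Real.norm_eq_abs] at this
        exact this.trans x.2.2
      rw [abs_le] at hb
      rw [Finset.mem_Icc]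
      constructor
      · rw [Int.le_floor]
        push_cast
        calc (-⌈T⌉ : ℝ) ≤ -T := by simpa using neg_le_neg (Int.le_ceil T)
          _ ≤ x.1 i := hb.1
      · have : (↑⌊x.1 i⌋ : ℝ) ≤ (⌈T⌉ : ℝ) := (Int.floor_le _).trans (hb.2.trans (Int.le_ceil T))
        exact_mod_cast this
  set F : {x : ι → ℝ // x ∈ unitLattice K ∧ ‖x‖ ≤ T} →
      {x : ι → ℝ // x ∈ unitLattice K ∧ ‖x‖ ≤ 1} × (ι → Finset.Icc (-⌈T⌉) ⌈T⌉) :=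
    fun x => (⟨x.1 - c (fun i => ⌊x.1 i⌋), (key x).1, (key x).2.1⟩,
      fun i => ⟨⌊x.1 i⌋, (key x).2.2 i⟩) with hFdef
  have hFinj : Function.Injective F := by
    intro a b hab
    have h2 : (fun i => ⌊a.1 i⌋) = (fun i => ⌊b.1 i⌋) := by
      funext i
      have := congrFun (congrArg Prod.snd hab) i
      exact Subtype.ext_iff.mp this
    have h1 : a.1 - c (fun i => ⌊a.1 i⌋) = b.1 - c (fun i => ⌊b.1 i⌋) :=
      Subtype.ext_iff.mp (congrArg Prod.fst hab)
    apply Subtype.ext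
    have : a.1 - c (fun i => ⌊a.1 i⌋) + c (fun i => ⌊a.1 i⌋) =
        b.1 - c (fun i => ⌊b.1 i⌋) + c (fun i => ⌊b.1 i⌋) := by rw [h1, h2]
    simpa using this
  calc Nat.card {x : ι → ℝ // x ∈ unitLattice K ∧ ‖x‖ ≤ T}
      ≤ Nat.card ({x : ι → ℝ // x ∈ unitLattice K ∧ ‖x‖ ≤ 1} ×
        (ι → Finset.Icc (-⌈T⌉) ⌈T⌉)) := Nat.card_le_card_of_injective F hFinj
    _ = Nat.card {x : ι → ℝ // x ∈ unitLattice K ∧ ‖x‖ ≤ 1} *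
        Nat.card (ι → Finset.Icc (-⌈T⌉) ⌈T⌉) := Nat.card_prod _ _
    _ = Nat.card {x : ι → ℝ // x ∈ unitLattice K ∧ ‖x‖ ≤ 1} *
        (2 * ⌈T⌉ + 1).toNat ^ rank K := by
      congr 1
      rw [Nat.card_pi]
      have h1 : ∀ i : ι, Nat.card (Finset.Icc (-⌈T⌉) ⌈T⌉) = (2 * ⌈T⌉ + 1).toNat := by
        intro i
        rw [Nat.card_eq_finsetCard, Int.card_Icc]
        congr 1
        ring
      rw [Finset.prod_congr rfl (fun i _ => h1 i), Finset.prod_const, Finset.card_univ]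
      congr 1
      have h2 : Fintype.card ι =
          Fintype.card (InfinitePlace K) - Fintype.card {w : InfinitePlace K // w = w₀} :=
        Fintype.card_subtype_compl _
      rw [h2, Fintype.card_subtype_eq, rank]

open NumberField.Units in
theorem card_units_of_bounded_height_le (κ : ℝ) (hκ : 0 < κ) :
    ∃ q : ℝ, ∀ D : ℝ, 1 + κ ≤ D →
      (Nat.card {u : (𝓞 K)ˣ // relHeight K (algebraMap (𝓞 K) K u) ≤ D} : ℝ) ≤
        q * Real.log D ^ rank K := by
  classical
  set ι := {w : InfinitePlace K // w ≠ w₀}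
  set m := Nat.card {x : ι → ℝ // x ∈ unitLattice K ∧ ‖x‖ ≤ 1} with hmdef
  set t := Nat.card (torsion K) with htdef
  refine ⟨(t : ℝ) * m * (2 + 3 / Real.log (1 + κ)) ^ rank K, ?_⟩
  intro D hD
  have hD1 : (1 : ℝ) ≤ D := by linarith
  have hc0 : 0 < Real.log (1 + κ) := Real.log_pos (by linarith)
  set T := Real.log D with hTdef
  have hTc : Real.log (1 + κ) ≤ T := Real.log_le_log (by linarith) hD
  have hT0 : 0 < T := lt_of_lt_of_le hc0 hTc
  -- the injection from bounded-height units into torsion × lattice points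
  have finA : Finite {x : ι → ℝ // x ∈ unitLattice K ∧ ‖x‖ ≤ T} :=
    (unitLattice_finite_of_norm_le K T).to_subtype
  set g : (ι → ℝ) → (𝓞 K)ˣ := fun x =>
    if h : ∃ v : (𝓞 K)ˣ, logEmbedding K (Additive.ofMul v) = x then h.choose else 1 with hgdef
  have hg : ∀ u : (𝓞 K)ˣ,
      logEmbedding K (Additive.ofMul (g (logEmbedding K (Additive.ofMul u)))) =
        logEmbedding K (Additive.ofMul u) := by
    intro u
    have h : ∃ v : (𝓞 K)ˣ, logEmbedding K (Additive.ofMul v) =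
        logEmbedding K (Additive.ofMul u) := ⟨u, rfl⟩
    simp only [hgdef, dif_pos h]
    exact h.choose_spec
  have keyG : ∀ u : {u : (𝓞 K)ˣ // relHeight K (algebraMap (𝓞 K) K u) ≤ D},
      (u.1 * (g (logEmbedding K (Additive.ofMul u.1)))⁻¹ ∈ torsion K) ∧
      logEmbedding K (Additive.ofMul u.1) ∈ unitLattice K ∧
      ‖logEmbedding K (Additive.ofMul u.1)‖ ≤ T := by
    intro u
    refine ⟨?_, ?_, abs_logEmbedding_le_log K u.1 hD1 u.2⟩
    · rw [← logEmbedding_eq_zero_iff]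
      have heq : logEmbedding K (Additive.ofMul (u.1 *
          (g (logEmbedding K (Additive.ofMul u.1)))⁻¹)) =
          logEmbedding K (Additive.ofMul u.1) -
            logEmbedding K (Additive.ofMul (g (logEmbedding K (Additive.ofMul u.1)))) := by
        rw [ofMul_mul, ofMul_inv, map_add, map_neg, sub_eq_add_neg]
      rw [heq, hg, sub_self]
    · exact Submodule.mem_map.mpr ⟨Additive.ofMul u.1, Submodule.mem_top, rfl⟩
  set G : {u : (𝓞 K)ˣ // relHeight K (algebraMap (𝓞 K) K u) ≤ D} →
      (torsion K) × {x : ι → ℝ // x ∈ unitLattice K ∧ ‖x‖ ≤ T} :=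
    fun u => (⟨u.1 * (g (logEmbedding K (Additive.ofMul u.1)))⁻¹, (keyG u).1⟩,
      ⟨logEmbedding K (Additive.ofMul u.1), (keyG u).2⟩) with hGdef
  have hGinj : Function.Injective G := by
    intro a b hab
    have h2 : logEmbedding K (Additive.ofMul a.1) = logEmbedding K (Additive.ofMul b.1) :=
      Subtype.ext_iff.mp (congrArg Prod.snd hab)
    have h1 : a.1 * (g (logEmbedding K (Additive.ofMul a.1)))⁻¹ =
        b.1 * (g (logEmbedding K (Additive.ofMul b.1)))⁻¹ :=
      Subtype.ext_iff.mp (congrArg Prod.fst hab)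
    apply Subtype.ext
    rw [h2] at h1
    exact mul_right_cancel h1
  have step1 : Nat.card {u : (𝓞 K)ˣ // relHeight K (algebraMap (𝓞 K) K u) ≤ D} ≤
      t * Nat.card {x : ι → ℝ // x ∈ unitLattice K ∧ ‖x‖ ≤ T} := by
    calc Nat.card {u : (𝓞 K)ˣ // relHeight K (algebraMap (𝓞 K) K u) ≤ D}
        ≤ Nat.card ((torsion K) × {x : ι → ℝ // x ∈ unitLattice K ∧ ‖x‖ ≤ T}) :=
          Nat.card_le_card_of_injective G hGinj
      _ = t * Nat.card {x : ι → ℝ // x ∈ unitLattice K ∧ ‖x‖ ≤ T} := Nat.card_prod _ _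
  have step2 := lattice_count K T hT0.le
  have stepN : Nat.card {u : (𝓞 K)ˣ // relHeight K (algebraMap (𝓞 K) K u) ≤ D} ≤
      t * (m * (2 * ⌈T⌉ + 1).toNat ^ rank K) :=
    step1.trans (Nat.mul_le_mul_left t step2)
  have hceil : ((2 * ⌈T⌉ + 1).toNat : ℝ) ≤ (2 + 3 / Real.log (1 + κ)) * T := by
    have hcn : (0 : ℤ) ≤ ⌈T⌉ := Int.ceil_nonneg hT0.le
    have h1 : ((2 * ⌈T⌉ + 1).toNat : ℝ) = ((2 * ⌈T⌉ + 1 : ℤ) : ℝ) := by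
      exact_mod_cast congrArg (fun z : ℤ => (z : ℝ)) (Int.toNat_of_nonneg (by omega))
    rw [h1]
    push_cast
    have h2 : (⌈T⌉ : ℝ) < T + 1 := Int.ceil_lt_add_one T
    have h3 : (3 : ℝ) ≤ 3 / Real.log (1 + κ) * T := by
      rw [div_mul_eq_mul_div, le_div_iff₀ hc0]
      nlinarith
    nlinarith
  calc (Nat.card {u : (𝓞 K)ˣ // relHeight K (algebraMap (𝓞 K) K u) ≤ D} : ℝ)
      ≤ ((t * (m * (2 * ⌈T⌉ + 1).toNat ^ rank K) : ℕ) : ℝ) := by exact_mod_cast stepN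
    _ = (t : ℝ) * m * ((2 * ⌈T⌉ + 1).toNat : ℝ) ^ rank K := by push_cast; ring
    _ ≤ (t : ℝ) * m * ((2 + 3 / Real.log (1 + κ)) * T) ^ rank K := by
        refine mul_le_mul_of_nonneg_left ?_ (by positivity)
        exact pow_le_pow_left₀ (by positivity) hceil _
    _ = (t : ℝ) * m * (2 + 3 / Real.log (1 + κ)) ^ rank K * T ^ rank K := by
        rw [mul_pow]; ring
end

section
/- Let K be a number field with unit rank r, and let α, β ∈ O_K be nonzero. Writing Λ(α) = (x_1,…,x_{r+1}) and Λ(β) = (y_1,…,y_{r+1}) where Λ(x) = (log|x|_v^{n_v})_{v∈M_K^∞}, one has log N((α,β)) + log H_K(α/β) = Σ_{i=1}^{r+1} max{x_i, y_i}. -/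
open NumberField IsDedekindDomain Real
open scoped nonZeroDivisors Classical

variable (K : Type*) [Field K] [NumberField K]

open UniqueFactorizationMonoid

noncomputable def cnt (v : HeightOneSpectrum (𝓞 K)) (I : Ideal (𝓞 K)) : ℕ :=
  (Associates.mk v.asIdeal).count (Associates.mk I).factors

lemma cnt_ne_zero_iff {v : HeightOneSpectrum (𝓞 K)} {I : Ideal (𝓞 K)} (hI : I ≠ 0) :
    cnt K v I ≠ 0 ↔ v.asIdeal ∣ I :=
  Associates.count_ne_zero_iff_dvd hI v.irreducible

lemma cnt_finite {I : Ideal (𝓞 K)} (hI : I ≠ 0) : {v | cnt K v I ≠ 0}.Finite :=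
  (Ideal.finite_factors hI).subset fun _ hv => (cnt_ne_zero_iff K hI).1 hv

lemma cnt_sup (v : HeightOneSpectrum (𝓞 K)) {I J : Ideal (𝓞 K)} (hI : I ≠ 0) (hJ : J ≠ 0) :
    cnt K v (I ⊔ J) = min (cnt K v I) (cnt K v J) := by
  have hIJ : I ⊔ J ≠ 0 := fun h => hI (le_antisymm (h ▸ le_sup_left) bot_le)
  have hvP : v.asIdeal.IsPrime := v.isPrime
  have hvb : v.asIdeal ≠ ⊥ := v.ne_bot
  rw [cnt, cnt, cnt, count_associates_factors_eq hIJ hvP hvb,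
    count_associates_factors_eq hI hvP hvb, count_associates_factors_eq hJ hvP hvb]
  have h := sup_eq_prod_inf_factors hI hJ
  rw [h, normalizedFactors_prod_of_prime, Multiset.count_inter]
  intro p hp
  exact prime_of_normalized_factor p (Multiset.mem_inter.1 hp).1

lemma absNorm_eq_prod {I : Ideal (𝓞 K)} (hI : I ≠ 0) (T : Finset (HeightOneSpectrum (𝓞 K)))
    (hT : ∀ v, cnt K v I ≠ 0 → v ∈ T) :
    (Ideal.absNorm I : ℝ) = ∏ v ∈ T, (Ideal.absNorm v.asIdeal : ℝ) ^ (cnt K v I) := by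
  conv_lhs => rw [← Ideal.finprod_heightOneSpectrum_factorization hI]
  rw [finprod_eq_prod_of_mulSupport_subset _ (s := T)]
  · rw [map_prod]
    simp_rw [HeightOneSpectrum.maxPowDividing, map_pow]
    push_cast [cnt]
    rfl
  · intro v hv
    apply hT
    intro h
    apply hv
    simp only [HeightOneSpectrum.maxPowDividing, cnt] at h ⊢
    rw [h, pow_zero]

lemma vadicAbs_div (v : HeightOneSpectrum (𝓞 K)) {α β : 𝓞 K} (hα : α ≠ 0) (hβ : β ≠ 0) :
    vadicAbs K v ((α : K) / (β : K)) =
      (Ideal.absNorm v.asIdeal : ℝ) ^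
        ((cnt K v (Ideal.span {β}) : ℤ) - (cnt K v (Ideal.span {α}) : ℤ)) := by
  have h : v.valuation K ((α : K) / (β : K)) =
      ((Multiplicative.ofAdd ((cnt K v (Ideal.span {β}) : ℤ) - (cnt K v (Ideal.span {α}) : ℤ)) :
        Multiplicative ℤ) : WithZero (Multiplicative ℤ)) := by
    rw [map_div₀, v.valuation_of_algebraMap, v.valuation_of_algebraMap,
      v.intValuation_if_neg hα, v.intValuation_if_neg hβ, WithZero.exp, WithZero.exp, ← WithZero.coe_div,
      WithZero.coe_inj]
    rw [← ofAdd_sub]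
    congr 1
    simp [cnt]
    ring
  rw [vadicAbs]
  split_ifs with hx
  · exact absurd (h ▸ hx) WithZero.coe_ne_zero
  · have hu : WithZero.unzero hx = Multiplicative.ofAdd
        ((cnt K v (Ideal.span {β}) : ℤ) - (cnt K v (Ideal.span {α}) : ℤ)) := by
      rw [← WithZero.coe_inj, WithZero.coe_unzero, h]
    rw [hu, toAdd_ofAdd]

lemma absNorm_span_eq_prod (β : 𝓞 K) :
    (Ideal.absNorm (Ideal.span {β}) : ℝ) = ∏ w : InfinitePlace K, w (β : K) ^ w.mult := by
  rw [InfinitePlace.prod_eq_abs_norm, Ideal.absNorm_span_singleton, ← Algebra.coe_norm_int]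
  push_cast [Nat.cast_natAbs]
  norm_num

theorem log_norm_add_log_height_eq_sum_max (α β : 𝓞 K) (hα : α ≠ 0) (hβ : β ≠ 0) :
    Real.log (Ideal.absNorm (Ideal.span {α, β})) +
        Real.log (relHeight K ((α : K) / (β : K))) =
      ∑ w : InfinitePlace K,
        max (w.mult * Real.log (w (α : K))) (w.mult * Real.log (w (β : K))) := by
  classical
  -- notation
  set cα : HeightOneSpectrum (𝓞 K) → ℕ := fun v => cnt K v (Ideal.span {α}) with hcα
  set cβ : HeightOneSpectrum (𝓞 K) → ℕ := fun v => cnt K v (Ideal.span {β}) with hcβ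
  have hsα : (Ideal.span {α} : Ideal (𝓞 K)) ≠ 0 := by
    simpa [Ideal.span_singleton_eq_bot] using hα
  have hsβ : (Ideal.span {β} : Ideal (𝓞 K)) ≠ 0 := by
    simpa [Ideal.span_singleton_eq_bot] using hβ
  have hspan : (Ideal.span {α, β} : Ideal (𝓞 K)) = Ideal.span {α} ⊔ Ideal.span {β} := by
    rw [Ideal.span_insert]
  have hgcd : (Ideal.span {α, β} : Ideal (𝓞 K)) ≠ 0 := by
    rw [hspan]
    exact fun h => hsα (le_antisymm (h ▸ le_sup_left) bot_le)
  have hcg : ∀ v, cnt K v (Ideal.span {α, β}) = min (cα v) (cβ v) := by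
    intro v; rw [hspan, cnt_sup K v hsα hsβ]
  -- the finite set T
  set T : Finset (HeightOneSpectrum (𝓞 K)) :=
    ((cnt_finite K hsα).union (cnt_finite K hsβ)).toFinset with hT
  have hTα : ∀ v, cα v ≠ 0 → v ∈ T := by
    intro v hv; simp only [hT, Set.Finite.mem_toFinset, Set.mem_union]; exact Or.inl hv
  have hTβ : ∀ v, cβ v ≠ 0 → v ∈ T := by
    intro v hv; simp only [hT, Set.Finite.mem_toFinset, Set.mem_union]; exact Or.inr hv
  -- base positivity
  have hNv : ∀ v : HeightOneSpectrum (𝓞 K), 1 < (Ideal.absNorm v.asIdeal : ℝ) := by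
    intro v
    have h0 : Ideal.absNorm v.asIdeal ≠ 0 := by
      rw [Ideal.absNorm_ne_zero_iff_mem_nonZeroDivisors]
      exact mem_nonZeroDivisors_of_ne_zero v.ne_bot
    have h1 : Ideal.absNorm v.asIdeal ≠ 1 := by
      rw [Ne, Ideal.absNorm_eq_one_iff]
      exact v.isPrime.ne_top
    have : 2 ≤ Ideal.absNorm v.asIdeal := by omega
    exact_mod_cast by omega
  -- norms as products over T
  have hNβ : (Ideal.absNorm (Ideal.span {β} : Ideal (𝓞 K)) : ℝ) =
      ∏ v ∈ T, (Ideal.absNorm v.asIdeal : ℝ) ^ ((cβ v : ℤ)) := by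
    rw [absNorm_eq_prod K hsβ T hTβ]
    simp [zpow_natCast]
    rfl
  have hNg : (Ideal.absNorm (Ideal.span {α, β} : Ideal (𝓞 K)) : ℝ) =
      ∏ v ∈ T, (Ideal.absNorm v.asIdeal : ℝ) ^ ((min (cα v) (cβ v) : ℤ)) := by
    rw [absNorm_eq_prod K hgcd T (fun v hv => by
      rw [hcg v] at hv; exact hTβ v (fun h => hv (by simp [h])))]
    simp_rw [hcg]
    refine Finset.prod_congr rfl fun v _ => ?_
    rw [← zpow_natCast]
    congr 1
    push_cast
    rfl
  -- pointwise finite local factor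
  have hloc : ∀ v : HeightOneSpectrum (𝓞 K),
      max (vadicAbs K v ((α : K) / (β : K))) 1 =
        (Ideal.absNorm v.asIdeal : ℝ) ^ ((cβ v : ℤ) - (min (cα v) (cβ v) : ℤ)) := by
    intro v
    have eα : cnt K v (Ideal.span {α}) = cα v := rfl
    have eβ : cnt K v (Ideal.span {β}) = cβ v := rfl
    rw [vadicAbs_div K v hα hβ, eα, eβ]
    have hmono : Monotone fun n : ℤ => (Ideal.absNorm v.asIdeal : ℝ) ^ n :=
      fun m n h => zpow_le_zpow_right₀ (le_of_lt (hNv v)) h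
    have h1 : (1 : ℝ) = (Ideal.absNorm v.asIdeal : ℝ) ^ (0 : ℤ) := by simp
    rw [h1, ← Monotone.map_max hmono]
    congr 1
    rcases le_total ((cα v : ℤ)) ((cβ v : ℤ)) with h | h
    · rw [min_eq_left h, max_eq_left (by omega)]
    · rw [min_eq_right h, max_eq_right (by omega)]
      omega
  -- finite part product
  have hB : (∏ᶠ v : HeightOneSpectrum (𝓞 K), max (vadicAbs K v ((α : K) / (β : K))) 1) =
      ∏ v ∈ T, (Ideal.absNorm v.asIdeal : ℝ) ^ ((cβ v : ℤ) - (min (cα v) (cβ v) : ℤ)) := by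
    rw [funext hloc]
    apply finprod_eq_prod_of_mulSupport_subset
    intro v hv
    apply hTβ
    intro h
    apply hv
    have h0 : (cβ v : ℤ) = 0 := by exact_mod_cast h
    have : (cβ v : ℤ) - (min ((cα v : ℤ)) ((cβ v : ℤ))) = 0 := by
      rw [h0]
      simp [min_eq_right (by positivity : (0:ℤ) ≤ (cα v : ℤ))]
    simp [this]
  -- combine finite part: Ngcd * B = Nβ
  have hNgB : (Ideal.absNorm (Ideal.span {α, β} : Ideal (𝓞 K)) : ℝ) *
      (∏ᶠ v : HeightOneSpectrum (𝓞 K), max (vadicAbs K v ((α : K) / (β : K))) 1) =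
      (Ideal.absNorm (Ideal.span {β} : Ideal (𝓞 K)) : ℝ) := by
    rw [hNg, hB, hNβ, ← Finset.prod_mul_distrib]
    apply Finset.prod_congr rfl
    intro v _
    rw [← zpow_add₀ (ne_of_gt (lt_trans one_pos (hNv v)))]
    congr 1
    rcases le_total ((cα v : ℤ)) ((cβ v : ℤ)) with h | h
    · rw [min_eq_left h]; ring
    · rw [min_eq_right h]; ring
  -- infinite part
  have hwβ : ∀ w : InfinitePlace K, 0 < w (β : K) := by
    intro w
    apply InfinitePlace.pos_iff.2
    simpa using hβ
  have hwα : ∀ w : InfinitePlace K, 0 < w (α : K) := by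
    intro w
    apply InfinitePlace.pos_iff.2
    simpa using hα
  have hA : (∏ w : InfinitePlace K, max (w ((α : K) / (β : K)) ^ w.mult) 1) =
      (∏ w : InfinitePlace K, (max (w (α : K)) (w (β : K))) ^ w.mult) /
        ∏ w : InfinitePlace K, w (β : K) ^ w.mult := by
    rw [← Finset.prod_div_distrib]
    apply Finset.prod_congr rfl
    intro w _
    rw [map_div₀, div_pow]
    have h1 : (1 : ℝ) = w (β : K) ^ w.mult / w (β : K) ^ w.mult := by
      rw [div_self (ne_of_gt (pow_pos (hwβ w) _))]
    rw [h1, max_div_div_right (by positivity)]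
    congr 1
    rcases le_total (w (α : K)) (w (β : K)) with h | h
    · rw [max_eq_right h, max_eq_right (pow_le_pow_left₀ (le_of_lt (hwα w)) h _)]
    · rw [max_eq_left h, max_eq_left (pow_le_pow_left₀ (le_of_lt (hwβ w)) h _)]
  -- heights
  have hP : (0 : ℝ) < ∏ w : InfinitePlace K, (max (w (α : K)) (w (β : K))) ^ w.mult := by
    apply Finset.prod_pos
    intro w _
    exact pow_pos (lt_max_of_lt_left (hwα w)) _
  have hNβpos : (0 : ℝ) < (Ideal.absNorm (Ideal.span {β} : Ideal (𝓞 K)) : ℝ) := by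
    rw [hNβ]
    exact Finset.prod_pos fun v _ => zpow_pos (lt_trans one_pos (hNv v)) _
  have hNgpos : (0 : ℝ) < (Ideal.absNorm (Ideal.span {α, β} : Ideal (𝓞 K)) : ℝ) := by
    rw [hNg]
    exact Finset.prod_pos fun v _ => zpow_pos (lt_trans one_pos (hNv v)) _
  have hrel : relHeight K ((α : K) / (β : K)) =
      (∏ w : InfinitePlace K, (max (w (α : K)) (w (β : K))) ^ w.mult) /
        (Ideal.absNorm (Ideal.span {α, β} : Ideal (𝓞 K)) : ℝ) := by
    rw [relHeight, hA]
    have hBval : (∏ᶠ v : HeightOneSpectrum (𝓞 K), max (vadicAbs K v ((α : K) / (β : K))) 1) =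
        (Ideal.absNorm (Ideal.span {β} : Ideal (𝓞 K)) : ℝ) /
          (Ideal.absNorm (Ideal.span {α, β} : Ideal (𝓞 K)) : ℝ) := by
      rw [eq_div_iff (ne_of_gt hNgpos), mul_comm, hNgB]
    rw [hBval, absNorm_span_eq_prod]
    have hQ : (∏ w : InfinitePlace K, w (β : K) ^ w.mult) ≠ 0 :=
      ne_of_gt (Finset.prod_pos fun w _ => pow_pos (hwβ w) _)
    have hG : (Ideal.absNorm (Ideal.span {α, β} : Ideal (𝓞 K)) : ℝ) ≠ 0 := ne_of_gt hNgpos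
    field_simp
  rw [hrel, Real.log_div (ne_of_gt hP) (ne_of_gt hNgpos)]
  rw [Real.log_prod (fun w _ => ne_of_gt (pow_pos (lt_max_of_lt_left (hwα w)) _))]
  have : ∀ w : InfinitePlace K,
      Real.log ((max (w (α : K)) (w (β : K))) ^ w.mult) =
        max (w.mult * Real.log (w (α : K))) (w.mult * Real.log (w (β : K))) := by
    intro w
    rw [Real.log_pow]
    rcases le_total (w (α : K)) (w (β : K)) with h | h
    · rw [max_eq_right h, max_eq_right]
      exact mul_le_mul_of_nonneg_left ((Real.log_le_log_iff (hwα w) (hwβ w)).2 h)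
        (by positivity)
    · rw [max_eq_left h, max_eq_left]
      exact mul_le_mul_of_nonneg_left ((Real.log_le_log_iff (hwβ w) (hwα w)).2 h)
        (by positivity)
  rw [Finset.sum_congr rfl (fun w _ => this w)]
  ring
end
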